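/- Define the domain O = ∪_{N≥1} (C_N \ C'_N) where C_N = {(x,y) ∈ B_{1/N}((0,0)) : 0 < y < N^{-2/β} x} and C'_N = {(x,y) ∈ B_{1/(N+1)}((0,0)) : 0 < y < N^{-2/β} x}, with B_R the Koch ball and β > 0 fixed. Then the ratio |O ∩ B_{1/N}((0,0))|_{β-1} / |B_{1/N}((0,0))|_{β-1} tends to 0 as N → ∞; in particular, O fails the uniform measure-density condition c^{-1}|B_R(z_0)|_{β-1} ≤ |O ∩ B_R(z_0)|_{β-1} at z_0 = (0,0). -/

import Mathlib

open MeasureTheory Filter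

noncomputable def enorm2 (z w : ℝ × ℝ) : ℝ :=
  Real.sqrt ((z.1 - w.1)^2 + (z.2 - w.2)^2)

/-- The Koch metric on the closed upper half-plane. -/
noncomputable def kochDist (z w : ℝ × ℝ) : ℝ :=
  enorm2 z w / Real.sqrt (z.2 + w.2 + enorm2 z w)

/-- The Koch ball relative to the open upper half-plane `H = ℝ × (0,∞)`. -/
def kochBall (R : ℝ) (z₀ : ℝ × ℝ) : Set (ℝ × ℝ) :=
  {z | 0 < z.2 ∧ kochDist z z₀ < R}

/-- The cone piece `C_N = {(x,y) ∈ B_{1/N}(0) : 0 < y < N^{-2/β} x}`. -/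
noncomputable def coneC (β : ℝ) (N : ℕ) : Set (ℝ × ℝ) :=
  {z | z ∈ kochBall (1 / (N : ℝ)) (0, 0) ∧ z.2 < (N : ℝ) ^ (-(2 / β)) * z.1}

/-- The cone piece `C'_N = {(x,y) ∈ B_{1/(N+1)}(0) : 0 < y < N^{-2/β} x}`. -/
noncomputable def coneC' (β : ℝ) (N : ℕ) : Set (ℝ × ℝ) :=
  {z | z ∈ kochBall (1 / ((N : ℝ) + 1)) (0, 0) ∧ z.2 < (N : ℝ) ^ (-(2 / β)) * z.1}

/-- Lebesgue's-thorn–type domain `O = ⋃_{N ≥ 1} (C_N \ C'_N)`. -/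
noncomputable def thornDomain (β : ℝ) : Set (ℝ × ℝ) :=
  ⋃ N : ℕ, ⋃ (_ : 1 ≤ N), (coneC β N \ coneC' β N)

open Set

section Aux

lemma int1d {β b : ℝ} (hβ : 0 < β) (hb : 0 < b) :
    ∫ y in Ioo (0:ℝ) b, y ^ (β - 1) = b ^ β / β := by
  rw [← integral_Ioc_eq_integral_Ioo, ← intervalIntegral.integral_of_le hb.le]
  rw [integral_rpow (Or.inl (by linarith)), Real.zero_rpow (by linarith)]
  ring_nf

lemma integ1d {β b : ℝ} (hβ : 0 < β) :
    IntegrableOn (fun y : ℝ => y ^ (β - 1)) (Ioo 0 b) :=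
  (intervalIntegral.intervalIntegrable_rpow' (by linarith)).1.mono_set Ioo_subset_Ioc_self

lemma rect_restrict (a₁ a₂ b : ℝ) :
    (volume : Measure (ℝ × ℝ)).restrict (Ioo a₁ a₂ ×ˢ Ioo 0 b)
      = (volume.restrict (Ioo a₁ a₂)).prod (volume.restrict (Ioo 0 b)) := by
  rw [Measure.volume_eq_prod, Measure.prod_restrict]

lemma integ2d {β : ℝ} (hβ : 0 < β) (a₁ a₂ b : ℝ) :
    IntegrableOn (fun z : ℝ × ℝ => z.2 ^ (β - 1)) (Ioo a₁ a₂ ×ˢ Ioo 0 b) := by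
  unfold IntegrableOn
  rw [rect_restrict]
  have h1 : Integrable (fun _ : ℝ => (1:ℝ)) (volume.restrict (Ioo a₁ a₂)) := by
    have : IsFiniteMeasure (volume.restrict (Ioo a₁ a₂)) := by
      constructor; simp [Real.volume_Ioo]
    exact integrable_const 1
  have := h1.mul_prod (integ1d hβ (b := b))
  simpa using this

lemma int2d {β : ℝ} (hβ : 0 < β) {a b : ℝ} (ha : 0 < a) (hb : 0 < b) :
    ∫ z in Ioo (0:ℝ) a ×ˢ Ioo (0:ℝ) b, z.2 ^ (β - 1) = a * (b ^ β / β) := by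
  rw [rect_restrict, MeasureTheory.integral_fun_snd (fun y : ℝ => y ^ (β - 1))]
  rw [int1d hβ hb]
  simp [Real.volume_Ioo, ENNReal.toReal_ofReal (by linarith : (0:ℝ) ≤ a), ha.le]

lemma mem_kochBall_origin {R : ℝ} (hR : 0 < R) {z : ℝ × ℝ} :
    z ∈ kochBall R (0,0) ↔ 0 < z.2 ∧
      (Real.sqrt (z.1^2 + z.2^2))^2 < R^2 * (z.2 + Real.sqrt (z.1^2 + z.2^2)) := by
  set r := Real.sqrt (z.1^2 + z.2^2) with hr
  have hrnn : 0 ≤ r := Real.sqrt_nonneg _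
  constructor
  · rintro ⟨hy, hd⟩
    refine ⟨hy, ?_⟩
    have hyr : z.2 ≤ r := by
      rw [hr]
      calc z.2 = Real.sqrt (z.2^2) := by rw [Real.sqrt_sq hy.le]
      _ ≤ _ := Real.sqrt_le_sqrt (by nlinarith [sq_nonneg z.1])
    have hpos : 0 < z.2 + r := by linarith
    have hsq : 0 < Real.sqrt (z.2 + r) := Real.sqrt_pos.mpr hpos
    have hd' : kochDist z (0,0) = r / Real.sqrt (z.2 + r) := by
      simp [kochDist, enorm2, hr]
    rw [hd'] at hd
    have h2 : (r / Real.sqrt (z.2 + r))^2 < R^2 := by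
      have h0 : 0 ≤ r / Real.sqrt (z.2 + r) := div_nonneg hrnn hsq.le
      nlinarith
    rw [div_pow, Real.sq_sqrt hpos.le] at h2
    calc r^2 = (r^2 / (z.2 + r)) * (z.2 + r) := by field_simp
    _ < R^2 * (z.2 + r) := by exact mul_lt_mul_of_pos_right h2 hpos
  · rintro ⟨hy, h⟩
    refine ⟨hy, ?_⟩
    have hyr : z.2 ≤ r := by
      rw [hr]
      calc z.2 = Real.sqrt (z.2^2) := by rw [Real.sqrt_sq hy.le]
      _ ≤ _ := Real.sqrt_le_sqrt (by nlinarith [sq_nonneg z.1])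
    have hpos : 0 < z.2 + r := by linarith
    have hsq : 0 < Real.sqrt (z.2 + r) := Real.sqrt_pos.mpr hpos
    have hd' : kochDist z (0,0) = r / Real.sqrt (z.2 + r) := by
      simp [kochDist, enorm2, hr]
    rw [hd']
    have h2 : (r / Real.sqrt (z.2 + r))^2 < R^2 := by
      rw [div_pow, Real.sq_sqrt hpos.le]
      rw [div_lt_iff₀ hpos]
      linarith
    have h0 : 0 ≤ r / Real.sqrt (z.2 + r) := div_nonneg hrnn hsq.le
    exact lt_of_pow_lt_pow_left₀ 2 hR.le h2

lemma kochBall_subset_box {R : ℝ} (hR : 0 < R) :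
    kochBall R (0,0) ⊆ Ioo (-(3*R^2)) (3*R^2) ×ˢ Ioo 0 (3*R^2) := by
  intro z hz
  rw [mem_kochBall_origin hR] at hz
  obtain ⟨hy, h⟩ := hz
  set r := Real.sqrt (z.1^2 + z.2^2) with hr
  have hrnn : 0 ≤ r := Real.sqrt_nonneg _
  have hyr : z.2 ≤ r := by
    rw [hr]
    calc z.2 = Real.sqrt (z.2^2) := by rw [Real.sqrt_sq hy.le]
    _ ≤ _ := Real.sqrt_le_sqrt (by nlinarith [sq_nonneg z.1])
  have hxr : |z.1| ≤ r := by
    rw [hr]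
    calc |z.1| = Real.sqrt (z.1^2) := (Real.sqrt_sq_eq_abs _).symm
    _ ≤ _ := Real.sqrt_le_sqrt (by nlinarith [sq_nonneg z.2])
  have hrpos : 0 < r := lt_of_lt_of_le hy hyr
  have hr2 : r < 2 * R^2 := by nlinarith
  have habs := abs_lt.mp (lt_of_le_of_lt hxr hr2)
  exact ⟨⟨by nlinarith [habs.1], by nlinarith [habs.2]⟩, hy, by linarith⟩

lemma box_subset_kochBall {R : ℝ} (hR : 0 < R) :
    Ioo (0:ℝ) (R^2/4) ×ˢ Ioo (0:ℝ) (R^2/4) ⊆ kochBall R (0,0) := by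
  intro z hz
  obtain ⟨⟨hx0, hx1⟩, hy0, hy1⟩ := hz
  rw [mem_kochBall_origin hR]
  refine ⟨hy0, ?_⟩
  set r := Real.sqrt (z.1^2 + z.2^2) with hr
  have hrnn : 0 ≤ r := Real.sqrt_nonneg _
  have hR2 : (0:ℝ) < R^2 := by positivity
  have hrlt : r < R^2 / 2 := by
    rw [hr]
    have : z.1^2 + z.2^2 < (R^2/2)^2 := by nlinarith
    calc Real.sqrt (z.1^2 + z.2^2) < Real.sqrt ((R^2/2)^2) :=
          Real.sqrt_lt_sqrt (by positivity) this
    _ = R^2/2 := Real.sqrt_sq (by positivity)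
  nlinarith [Real.sq_sqrt (by positivity : (0:ℝ) ≤ z.1^2 + z.2^2), hrnn]

lemma measurable_kochDist (z₀ : ℝ × ℝ) : Measurable fun z => kochDist z z₀ := by
  have h1 : Continuous fun z : ℝ × ℝ => enorm2 z z₀ := by
    unfold enorm2; fun_prop
  have h2 : Continuous fun z : ℝ × ℝ => Real.sqrt (z.2 + z₀.2 + enorm2 z z₀) := by
    unfold enorm2; fun_prop
  exact h1.measurable.div h2.measurable

lemma measurableSet_kochBall (R : ℝ) (z₀ : ℝ × ℝ) : MeasurableSet (kochBall R z₀) := by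
  have : kochBall R z₀ = {z : ℝ × ℝ | 0 < z.2} ∩ {z | kochDist z z₀ < R} := rfl
  rw [this]
  exact (measurableSet_lt measurable_const measurable_snd).inter
    (measurableSet_lt (measurable_kochDist z₀) measurable_const)

lemma measurableSet_coneC (β : ℝ) (N : ℕ) : MeasurableSet (coneC β N) :=
  (measurableSet_kochBall _ _).inter
    (measurableSet_lt measurable_snd (measurable_fst.const_mul _))

lemma measurableSet_coneC' (β : ℝ) (N : ℕ) : MeasurableSet (coneC' β N) :=
  (measurableSet_kochBall _ _).inter
    (measurableSet_lt measurable_snd (measurable_fst.const_mul _))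

lemma measurableSet_thornDomain (β : ℝ) : MeasurableSet (thornDomain β) :=
  MeasurableSet.iUnion fun N => MeasurableSet.iUnion fun _ =>
    (measurableSet_coneC β N).diff (measurableSet_coneC' β N)

lemma thorn_inter_subset {β : ℝ} (hβ : 0 < β) {N : ℕ} (hN : 1 ≤ N) :
    thornDomain β ∩ kochBall (1/(N:ℝ)) (0,0) ⊆
      Ioo (0:ℝ) (3*(1/(N:ℝ))^2) ×ˢ
        Ioo (0:ℝ) ((N:ℝ) ^ (-(2/β)) * (3*(1/(N:ℝ))^2)) := by
  have hn0 : (0:ℝ) < (N:ℝ) := by exact_mod_cast hN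
  have hR : (0:ℝ) < 1/(N:ℝ) := by positivity
  rintro z ⟨hzO, hzB⟩
  simp only [thornDomain, mem_iUnion] at hzO
  obtain ⟨k, hk, hmem⟩ := hzO
  have hk0 : (0:ℝ) < (k:ℝ) := by exact_mod_cast hk
  have hkN : N ≤ k := by
    by_contra hlt
    push_neg at hlt
    have hk1N : (k:ℝ) + 1 ≤ (N:ℝ) := by exact_mod_cast hlt
    have hle : 1/(N:ℝ) ≤ 1/((k:ℝ)+1) :=
      one_div_le_one_div_of_le (by positivity) hk1N
    exact hmem.2 ⟨⟨hzB.1, lt_of_lt_of_le hzB.2 hle⟩, hmem.1.2⟩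
  have hcone : z.2 < (k:ℝ) ^ (-(2/β)) * z.1 := hmem.1.2
  have hy : 0 < z.2 := hzB.1
  have hδk : (0:ℝ) < (k:ℝ) ^ (-(2/β)) := Real.rpow_pos_of_pos hk0 _
  have hx : 0 < z.1 := by nlinarith
  have hδle : (k:ℝ) ^ (-(2/β)) ≤ (N:ℝ) ^ (-(2/β)) :=
    Real.rpow_le_rpow_of_nonpos hn0 (by exact_mod_cast hkN)
      (by rw [neg_nonpos]; positivity)
  have hconeN : z.2 < (N:ℝ) ^ (-(2/β)) * z.1 :=
    lt_of_lt_of_le hcone (mul_le_mul_of_nonneg_right hδle hx.le)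
  have hbox := kochBall_subset_box hR hzB
  have hδN : (0:ℝ) < (N:ℝ) ^ (-(2/β)) := Real.rpow_pos_of_pos hn0 _
  refine ⟨⟨hx, hbox.1.2⟩, hy, ?_⟩
  exact lt_of_lt_of_le hconeN
    (mul_le_mul_of_nonneg_left (le_of_lt hbox.1.2) hδN.le)

lemma ratio_calc {β : ℝ} (hβ : 0 < β) {N : ℕ} (hN : 1 ≤ N) :
    ((3*(1/(N:ℝ))^2) * (((N:ℝ) ^ (-(2/β)) * (3*(1/(N:ℝ))^2)) ^ β / β)) /
      (((1/(N:ℝ))^2/4) * (((1/(N:ℝ))^2/4) ^ β / β))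
      = 12 ^ β * 12 * (((N:ℝ)^2)⁻¹) := by
  have hn0 : (0:ℝ) < (N:ℝ) := by exact_mod_cast hN
  set a : ℝ := 3*(1/(N:ℝ))^2 with ha
  set q : ℝ := (1/(N:ℝ))^2/4 with hq
  have haq : a = 12 * q := by rw [ha, hq]; ring
  have hq0 : 0 < q := by positivity
  have hδβ : ((N:ℝ) ^ (-(2/β))) ^ β = ((N:ℝ)^2)⁻¹ := by
    rw [← Real.rpow_natCast (N:ℝ) 2, ← Real.rpow_neg hn0.le,
      ← Real.rpow_mul hn0.le]
    congr 1
    push_cast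
    field_simp
  have hmul : ((N:ℝ) ^ (-(2/β)) * a) ^ β = ((N:ℝ)^2)⁻¹ * (12 ^ β * q ^ β) := by
    rw [Real.mul_rpow (Real.rpow_pos_of_pos hn0 _).le (by positivity), hδβ, haq,
      Real.mul_rpow (by norm_num) hq0.le]
  rw [hmul, haq]
  have hqβ : (0:ℝ) < q ^ β := Real.rpow_pos_of_pos hq0 β
  field_simp

end Aux

/-- The thorn domain fails the uniform measure-density condition at the origin:
the ratio `|O ∩ B_{1/N}(0)|_{β-1} / |B_{1/N}(0)|_{β-1}` tends to `0`, and in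
particular there is no `c > 0` with
`c⁻¹ |B_R(0)|_{β-1} ≤ |O ∩ B_R(0)|_{β-1}` for all small `R > 0`. -/
theorem thornDomain_measure_density_fails (β : ℝ) (hβ : 0 < β) :
    Tendsto
      (fun N : ℕ =>
        (∫ z in thornDomain β ∩ kochBall (1 / (N : ℝ)) (0, 0), z.2 ^ (β - 1)) /
        (∫ z in kochBall (1 / (N : ℝ)) (0, 0), z.2 ^ (β - 1)))
      atTop (nhds 0) ∧
    ¬ ∃ c > (0:ℝ), ∃ Rbar > (0:ℝ), ∀ R : ℝ, 0 < R → R ≤ Rbar →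
        c⁻¹ * (∫ z in kochBall R (0, 0), z.2 ^ (β - 1)) ≤
          ∫ z in thornDomain β ∩ kochBall R (0, 0), z.2 ^ (β - 1) := by
  set f : ℝ × ℝ → ℝ := fun z => z.2 ^ (β - 1) with hfdef
  set num : ℕ → ℝ := fun N => ∫ z in thornDomain β ∩ kochBall (1/(N:ℝ)) (0,0), f z with hnum
  set den : ℕ → ℝ := fun N => ∫ z in kochBall (1/(N:ℝ)) (0,0), f z with hden
  -- lower bound on denominator at any radius R
  have hdenR : ∀ R : ℝ, 0 < R →
      (R^2/4) * ((R^2/4) ^ β / β) ≤ ∫ z in kochBall R (0,0), f z := by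
    intro R hR
    have hball_int : IntegrableOn f (kochBall R (0,0)) :=
      (integ2d hβ (-(3*R^2)) (3*R^2) (3*R^2)).mono_set (kochBall_subset_box hR)
    have h := setIntegral_mono_set hball_int
      (((ae_restrict_mem (measurableSet_kochBall R (0,0))).mono
        (fun z hz => Real.rpow_nonneg hz.1.le _)))
      ((HasSubset.Subset.eventuallyLE (box_subset_kochBall hR)))
    calc (R^2/4) * ((R^2/4) ^ β / β)
        = ∫ z in Ioo (0:ℝ) (R^2/4) ×ˢ Ioo (0:ℝ) (R^2/4), f z :=
          (int2d hβ (by positivity) (by positivity)).symm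
    _ ≤ _ := h
  have hdenRpos : ∀ R : ℝ, 0 < R → (0:ℝ) < (R^2/4) * ((R^2/4) ^ β / β) := by
    intro R hR
    have : (0:ℝ) < (R^2/4) ^ β := Real.rpow_pos_of_pos (by positivity) β
    positivity
  -- upper bound on numerator
  have hnumUB : ∀ N : ℕ, 1 ≤ N →
      num N ≤ (3*(1/(N:ℝ))^2) *
        (((N:ℝ) ^ (-(2/β)) * (3*(1/(N:ℝ))^2)) ^ β / β) := by
    intro N hN
    have hn0 : (0:ℝ) < (N:ℝ) := by exact_mod_cast hN
    have hb : (0:ℝ) < (N:ℝ) ^ (-(2/β)) * (3*(1/(N:ℝ))^2) := by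
      have := Real.rpow_pos_of_pos hn0 (-(2/β))
      positivity
    have hint : IntegrableOn f
        (Ioo (0:ℝ) (3*(1/(N:ℝ))^2) ×ˢ
          Ioo (0:ℝ) ((N:ℝ) ^ (-(2/β)) * (3*(1/(N:ℝ))^2))) := integ2d hβ _ _ _
    have h := setIntegral_mono_set hint
      ((ae_restrict_mem ((measurableSet_Ioo.prod measurableSet_Ioo))).mono
        (fun z hz => Real.rpow_nonneg hz.2.1.le _))
      (HasSubset.Subset.eventuallyLE (thorn_inter_subset hβ hN))
    calc num N ≤ ∫ z in Ioo (0:ℝ) (3*(1/(N:ℝ))^2) ×ˢ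
          Ioo (0:ℝ) ((N:ℝ) ^ (-(2/β)) * (3*(1/(N:ℝ))^2)), f z := h
    _ = _ := int2d hβ (by positivity) hb
  have hnum0 : ∀ N : ℕ, 0 ≤ num N := by
    intro N
    apply setIntegral_nonneg
      ((measurableSet_thornDomain β).inter (measurableSet_kochBall _ _))
    intro z hz
    exact Real.rpow_nonneg hz.2.1.le _
  have hden0 : ∀ N : ℕ, 1 ≤ N → 0 < den N := by
    intro N hN
    have hn0 : (0:ℝ) < (N:ℝ) := by exact_mod_cast hN
    have hR : (0:ℝ) < 1/(N:ℝ) := by positivity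
    exact lt_of_lt_of_le (hdenRpos _ hR) (hdenR _ hR)
  have hratio : ∀ N : ℕ, 1 ≤ N →
      num N / den N ≤ 12 ^ β * 12 * (((N:ℝ)^2)⁻¹) := by
    intro N hN
    have hn0 : (0:ℝ) < (N:ℝ) := by exact_mod_cast hN
    have hR : (0:ℝ) < 1/(N:ℝ) := by positivity
    have h1 := div_le_div₀ ?_ (hnumUB N hN) (hdenRpos _ hR) (hdenR _ hR)
    · rw [ratio_calc hβ hN] at h1
      exact h1
    · exact le_trans (hnum0 N) (hnumUB N hN)
  have htend : Tendsto (fun N : ℕ => num N / den N) atTop (nhds 0) := by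
    have hg : Tendsto (fun N : ℕ => 12 ^ β * 12 * (((N:ℝ)^2)⁻¹)) atTop (nhds 0) := by
      have h2 : Tendsto (fun N : ℕ => ((N:ℝ)^2)) atTop atTop :=
        (tendsto_pow_atTop (two_ne_zero)).comp tendsto_natCast_atTop_atTop
      have := (h2.inv_tendsto_atTop).const_mul (12 ^ β * 12 : ℝ)
      simpa using this
    apply squeeze_zero' ?_ ?_ hg
    · filter_upwards [eventually_ge_atTop 1] with N hN
      exact div_nonneg (hnum0 N) (hden0 N hN).le
    · filter_upwards [eventually_ge_atTop 1] with N hN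
      exact hratio N hN
  refine ⟨htend, ?_⟩
  rintro ⟨c, hc, Rbar, hRb, h⟩
  have hev1 : ∀ᶠ N : ℕ in atTop, num N / den N < c⁻¹ :=
    htend.eventually_lt_const (inv_pos.mpr hc)
  have hev2 : ∀ᶠ N : ℕ in atTop, 1/(N:ℝ) < Rbar :=
    tendsto_one_div_atTop_nhds_zero_nat.eventually_lt_const hRb
  obtain ⟨N, ⟨hN1, hN2⟩, hN3⟩ := (((eventually_ge_atTop 1).and hev1).and hev2).exists
  have hn0 : (0:ℝ) < (N:ℝ) := by exact_mod_cast hN1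
  have hR : (0:ℝ) < 1/(N:ℝ) := by positivity
  have happ := h (1/(N:ℝ)) hR hN3.le
  have hdpos := hden0 N hN1
  have : c⁻¹ ≤ num N / den N := by
    rw [le_div_iff₀ hdpos]
    exact happ
  linarith [hN2]
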